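/- Let S¹ act on itself ergodically via an action of G = ⊕_{p∈P}𝔽_p by rotations T_g x = φ(g)x with φ: G → S¹ a homomorphism with dense image, where P is an unbounded set of primes. Then every phase polynomial F: S¹ → S¹ (of any finite degree, with respect to this G-action) is a constant multiple of a character z ↦ zⁿ; in particular every phase polynomial has degree < 2. -/

import Mathlib

open MeasureTheory

noncomputable instance : MeasurableSpace Circle := borel Circle
instance : BorelSpace Circle := ⟨rfl⟩

/-- The multiplicative derivative of `φ` with respect to a transformation `S`. -/
noncomputable def mulDeriv {X U : Type*} [Group U] (S : X → X) (φ : X → U) : X → U :=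
  fun x => φ (S x) * (φ x)⁻¹

section Helpers
open Real Measure Complex

notation "𝕋" => AddCircle (2*π)
instance : Fact (0 < 2*π) := ⟨by positivity⟩
noncomputable abbrev μ𝕋 : Measure 𝕋 := AddCircle.haarAddCircle
noncomputable abbrev ν : Measure Circle := Measure.haar

noncomputable def e : 𝕋 ≃ₜ Circle := AddCircle.homeomorphCircle'
lemma e_add (x y : 𝕋) : e (x+y) = e x * e y := Real.Angle.toCircle_add x y
lemma e_zero : e 0 = 1 := Real.Angle.toCircle_zero
lemma e_neg (x : 𝕋) : e (-x) = (e x)⁻¹ := by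
  have h : e (-x) * e x = 1 := by rw [← e_add, neg_add_cancel, e_zero]
  exact eq_inv_of_mul_eq_one_left h
noncomputable def E : 𝕋 ≃ᵐ Circle := e.toMeasurableEquiv

lemma toCircle_e (t : 𝕋) : AddCircle.toCircle t = e t := by
  induction t using QuotientAddGroup.induction_on with
  | _ x => rw [AddCircle.toCircle_apply_mk]
           show _ = Circle.exp x
           rw [div_self (by positivity : (2*π) ≠ 0), one_mul]

noncomputable def toCircleHom : 𝕋 →+ Additive Circle :=
  AddMonoidHom.mk' (fun t => Additive.ofMul (AddCircle.toCircle t)) AddCircle.toCircle_add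

lemma toCircle_zsmul (n : ℤ) (t : 𝕋) :
    AddCircle.toCircle (n • t) = (AddCircle.toCircle t) ^ n := by
  have := map_zsmul toCircleHom n t
  exact this

lemma fourier_char (n : ℤ) (t : 𝕋) : fourier n t = ((e t : Circle) : ℂ)^n := by
  rw [fourier_apply, toCircle_zsmul, ← toCircle_e]
  norm_cast

lemma fourier_add_x (m : ℤ) (x y : 𝕋) : fourier m (x + y) = fourier m x * fourier m y := by
  rw [fourier_char, fourier_char, fourier_char, e_add]
  push_cast
  rw [mul_zpow]

instance mapE_invariant : (Measure.map E μ𝕋).IsMulLeftInvariant := by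
  constructor
  intro y
  have h1 : ((y * ·) ∘ E) = (E ∘ (· + E.symm y)) := by
    funext t
    simp only [Function.comp_apply]
    show y * e t = e (t + e.symm y)
    rw [e_add, mul_comm]
    congr 1
    exact (e.apply_symm_apply y).symm
  rw [Measure.map_map (by exact measurable_const_mul y) E.measurable, h1,
    ← Measure.map_map E.measurable (by exact measurable_add_const _)]
  congr 1
  exact (measurePreserving_add_right μ𝕋 (E.symm y)).map_eq

instance mapE_prob : IsProbabilityMeasure (Measure.map E μ𝕋) :=
  isProbabilityMeasure_map E.measurable.aemeasurable

lemma mapE_eq : Measure.map E μ𝕋 = haarScalarFactor (Measure.map E μ𝕋) ν • ν :=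
  isMulInvariant_eq_smul_of_compactSpace _ _

lemma κ_ne : haarScalarFactor (Measure.map E μ𝕋) ν ≠ 0 := by
  intro h
  have h2 := mapE_eq
  rw [h, zero_smul] at h2
  have := measure_univ (μ := Measure.map E μ𝕋)
  rw [h2] at this
  simp at this

lemma ae_transfer : Filter.map E (ae μ𝕋) = ae ν := by
  rw [MeasurableEquiv.map_ae, mapE_eq, ae_smul_measure_eq (by exact_mod_cast κ_ne)]

lemma ae_to_torus {p : Circle → Prop} (h : ∀ᵐ y ∂ν, p y) : ∀ᵐ t ∂μ𝕋, p (e t) := by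
  rw [← ae_transfer] at h
  exact h

lemma ae_of_torus {p : Circle → Prop} (h : ∀ᵐ t ∂μ𝕋, p (e t)) : ∀ᵐ y ∂ν, p y := by
  rw [← ae_transfer]
  exact h

lemma zpow_trivial {k : ℤ} (h : ∀ z : Circle, z ^ k = 1) : k = 0 := by
  by_contra hk
  have hd : 0 < k.natAbs := Int.natAbs_pos.2 hk
  have hnat : ∀ z : Circle, z ^ (k.natAbs) = 1 := by
    intro z
    rcases Int.natAbs_eq k with h' | h'
    · have := h z; rwa [h', zpow_natCast] at this
    · have := h z; rw [h', zpow_neg, zpow_natCast, inv_eq_one] at this; exact this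
  have h1 := hnat (Circle.exp (π / k.natAbs))
  have h2 : ((Circle.exp (π / k.natAbs) : Circle) : ℂ) ^ (k.natAbs) = 1 := by
    have h2' := congrArg Circle.coeHom h1
    rw [map_pow, map_one] at h2'
    exact h2'
  have h3 : ((Circle.exp (π / k.natAbs) : Circle) : ℂ) ^ (k.natAbs)
      = Complex.exp (π * Complex.I) := by
    rw [Circle.coe_exp, ← Complex.exp_nat_mul]
    congr 1
    have hne : (k.natAbs : ℂ) ≠ 0 := by exact_mod_cast hd.ne'
    have hne2 : (k.natAbs : ℝ) ≠ 0 := by exact_mod_cast hd.ne'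
    push_cast
    field_simp
  rw [h3, Complex.exp_pi_mul_I] at h2
  norm_num at h2

lemma coeff_fourier (k n : ℤ) :
    fourierCoeff (fun t : 𝕋 => (fourier k t : ℂ)) n = if n = k then 1 else 0 := by
  have h1 : fourierCoeff (⇑(fourierLp (T := 2*π) 2 k) : 𝕋 → ℂ) n
      = fourierBasis.repr (fourierLp 2 k) n := (fourierBasis_repr _ _).symm
  have h2 : fourierCoeff (fun t : 𝕋 => (fourier k t : ℂ)) n
      = fourierCoeff (⇑(fourierLp (T := 2*π) 2 k) : 𝕋 → ℂ) n := by
    apply integral_congr_ae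
    filter_upwards [coeFn_fourierLp (T := 2*π) 2 k] with t ht
    rw [ht]
  rw [h2, h1, ← coe_fourierBasis, fourierBasis.repr_self, lp.single_apply]
  simp [eq_comm]
  by_cases hkn : k = n
  · subst hkn; simp
  · simp [hkn, Pi.single_apply, Ne.symm hkn]

lemma eq_zero_of_coeffs_zero (f : 𝕋 → ℂ) (hf : MemLp f 2 μ𝕋)
    (h : ∀ n, fourierCoeff f n = 0) : f =ᵐ[μ𝕋] 0 := by
  have key : hf.toLp f = 0 := by
    have h0 : fourierBasis.repr (hf.toLp f) = 0 := by
      ext n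
      rw [fourierBasis_repr]
      have : fourierCoeff (⇑(hf.toLp f) : 𝕋 → ℂ) n = fourierCoeff f n :=
        integral_congr_ae (by filter_upwards [hf.coeFn_toLp] with t ht; rw [ht])
      simp [this, h n]
    simpa using fourierBasis.repr.injective (by simpa using h0)
  have := hf.coeFn_toLp
  rw [key] at this
  exact (this.symm.trans (Lp.coeFn_zero _ _ _))

lemma fourierCoeff_def (f : 𝕋 → ℂ) (n : ℤ) :
    fourierCoeff f n = ∫ t, fourier (-n) t * f t ∂μ𝕋 := by
  simp [fourierCoeff, smul_eq_mul]

lemma coe_zpow (z : Circle) (n : ℤ) : ((z ^ n : Circle) : ℂ) = (z : ℂ) ^ n :=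
  map_zpow Circle.coeHom z n

lemma norm_fourier (n : ℤ) (t : 𝕋) : ‖fourier n t‖ = 1 := by
  rw [fourier_char, norm_zpow]
  norm_num [Circle.norm_coe]

lemma eigen_char {G : Type*} (φ : G → Circle) (hdense : DenseRange φ)
    (F : Circle → Circle) (hFmeas : Measurable F) (c : G → Circle)
    (heig : ∀ g, ∀ᵐ x ∂ν, F (φ g * x) = c g * F x) :
    ∃ (b : Circle) (n : ℤ), ∀ᵐ x ∂ν, F x = b * x ^ n := by
  have hcont : Continuous (fun z : Circle => (z : ℂ)) := continuous_subtype_val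
  have hcoeC : Measurable (fun z : Circle => (z : ℂ)) := hcont.measurable
  set f : 𝕋 → ℂ := fun t => (F (e t) : ℂ) with hfdef
  have hmeasf : Measurable f := hcoeC.comp (hFmeas.comp E.measurable)
  have hnorm : ∀ t, ‖f t‖ = 1 := fun t => by
    simp [hfdef, Circle.norm_coe]
  have hf2 : MemLp f 2 μ𝕋 :=
    MemLp.of_bound hmeasf.aestronglyMeasurable 1 (ae_of_all _ fun t => (hnorm t).le)
  -- the key coefficient relation
  have key : ∀ (g : G) (n : ℤ),
      ((φ g : ℂ))^n * fourierCoeff f n = ((c g : ℂ)) * fourierCoeff f n := by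
    intro g n
    set a : 𝕋 := e.symm (φ g) with ha
    have hea : e a = φ g := e.apply_symm_apply _
    have h1 : ∀ᵐ t ∂μ𝕋, f (t + a) = (c g : ℂ) * f t := by
      filter_upwards [ae_to_torus (heig g)] with t ht
      show (F (e (t + a)) : ℂ) = _
      rw [e_add, hea, mul_comm (e t) (φ g), ht]
      push_cast
      ring
    have I1 : ∫ t, fourier (-n) t * f (t + a) ∂μ𝕋 = (c g : ℂ) * fourierCoeff f n := by
      calc ∫ t, fourier (-n) t * f (t + a) ∂μ𝕋
          = ∫ t, (c g : ℂ) * (fourier (-n) t * f t) ∂μ𝕋 :=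
            integral_congr_ae (by filter_upwards [h1] with t ht; rw [ht]; ring)
        _ = (c g : ℂ) * ∫ t, fourier (-n) t * f t ∂μ𝕋 := integral_const_mul _ _
        _ = (c g : ℂ) * fourierCoeff f n := by rw [fourierCoeff_def]
    have I2 : ∫ t, fourier (-n) t * f (t + a) ∂μ𝕋
        = ((φ g : ℂ))^n * fourierCoeff f n := by
      have sub1 : ∫ t, fourier (-n) t * f (t + a) ∂μ𝕋
          = ∫ s, fourier (-n) (s - a) * f s ∂μ𝕋 := by
        have h := integral_add_right_eq_self (μ := μ𝕋)
          (fun s => fourier (-n) (s - a) * f s) a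
        calc ∫ t, fourier (-n) t * f (t + a) ∂μ𝕋
            = ∫ t, fourier (-n) (t + a - a) * f (t + a) ∂μ𝕋 := by
              simp [add_sub_cancel_right]
          _ = ∫ s, fourier (-n) (s - a) * f s ∂μ𝕋 := h
      have hfa : ∀ s : 𝕋, fourier (-n) (s - a) = fourier (-n) s * ((φ g : ℂ))^n := by
        intro s
        rw [sub_eq_add_neg, fourier_add_x]
        congr 1
        rw [fourier_char, e_neg, hea]
        push_cast
        rw [inv_zpow, ← zpow_neg, neg_neg]
      rw [sub1]
      have hrw : (fun s => fourier (-n) (s - a) * f s)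
          = fun s => ((φ g : ℂ))^n * (fourier (-n) s * f s) :=
        funext fun s => by rw [hfa s]; ring
      calc ∫ s, fourier (-n) (s - a) * f s ∂μ𝕋
          = ∫ s, ((φ g : ℂ))^n * (fourier (-n) s * f s) ∂μ𝕋 := by rw [hrw]
        _ = ((φ g : ℂ))^n * ∫ s, fourier (-n) s * f s ∂μ𝕋 := integral_const_mul _ _
        _ = ((φ g : ℂ))^n * fourierCoeff f n := by rw [fourierCoeff_def]
    rw [← I1, ← I2]
  -- some coefficient is nonzero
  have hex : ∃ n, fourierCoeff f n ≠ 0 := by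
    by_contra hcon
    push_neg at hcon
    have h0 := eq_zero_of_coeffs_zero f hf2 hcon
    have hfalse : ∀ᵐ t ∂μ𝕋, False := by
      filter_upwards [h0] with t ht
      have := hnorm t
      rw [ht] at this
      simp at this
    obtain ⟨t, ht⟩ := hfalse.exists
    exact ht
  obtain ⟨n₀, hn₀⟩ := hex
  have hcg : ∀ g, (c g : ℂ) = ((φ g : ℂ))^n₀ := by
    intro g
    have := key g n₀
    exact (mul_right_cancel₀ hn₀ (this.symm)).symm ▸ rfl
  have huniq : ∀ k, fourierCoeff f k ≠ 0 → k = n₀ := by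
    intro k hk
    have hφ : ∀ z : Circle, z ^ (k - n₀) = 1 := by
      have hrange : ∀ g, (φ g) ^ (k - n₀) = 1 := by
        intro g
        have h1 := key g k
        have h3 := mul_right_cancel₀ hk h1
        rw [hcg g] at h3
        apply Circle.coe_injective
        rw [coe_zpow, Circle.coe_one, zpow_sub₀ (Circle.coe_ne_zero _), h3, div_self]
        exact zpow_ne_zero _ (Circle.coe_ne_zero _)
      intro z
      have hcl : IsClosed {w : Circle | w ^ (k - n₀) = 1} :=
        isClosed_eq (continuous_zpow _) continuous_const
      have hsubset : closure (Set.range φ) ⊆ {w : Circle | w ^ (k - n₀) = 1} :=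
        closure_minimal (by rintro w ⟨g, rfl⟩; exact hrange g) hcl
      exact hsubset (by rw [hdense.closure_range]; trivial)
    have hk0 := zpow_trivial hφ
    omega
  set b : ℂ := fourierCoeff f n₀ with hbdef
  have hbddmeas : ∀ (u : 𝕋 → ℂ), Measurable u → (∀ t, ‖u t‖ ≤ 1) → Integrable u μ𝕋 :=
    fun u hu hb => memLp_one_iff_integrable.1
      (MemLp.of_bound hu.aestronglyMeasurable 1 (ae_of_all _ hb))
  have hmeasfourier : ∀ k : ℤ, Measurable (fun t : 𝕋 => (fourier k t : ℂ)) :=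
    fun k => (fourier k).continuous.measurable
  have hsub : ∀ n, fourierCoeff (fun t => f t - b * fourier n₀ t) n = 0 := by
    intro n
    have hint1 : Integrable (fun t => fourier (-n) t * f t) μ𝕋 := by
      apply hbddmeas _ ((hmeasfourier (-n)).mul hmeasf)
      intro t
      rw [Pi.mul_apply, norm_mul, norm_fourier, hnorm, one_mul]
    have hint2 : Integrable (fun t => fourier (-n) t * (b * fourier n₀ t)) μ𝕋 := by
      have : Integrable (fun t => fourier (-n) t * fourier n₀ t) μ𝕋 := by
        apply hbddmeas _ ((hmeasfourier (-n)).mul (hmeasfourier n₀))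
        intro t
        rw [Pi.mul_apply, norm_mul, norm_fourier, norm_fourier, one_mul]
      have h' := this.const_mul b
      apply h'.congr
      apply ae_of_all
      intro t
      ring
    have expand : fourierCoeff (fun t => f t - b * fourier n₀ t) n
        = fourierCoeff f n - b * fourierCoeff (fun t : 𝕋 => (fourier n₀ t : ℂ)) n := by
      rw [fourierCoeff_def, fourierCoeff_def, fourierCoeff_def]
      have : (fun t : 𝕋 => fourier (-n) t * (f t - b * fourier n₀ t))
          = fun t => fourier (-n) t * f t - fourier (-n) t * (b * fourier n₀ t) :=
        funext fun t => by ring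
      rw [this, integral_sub hint1 hint2]
      congr 1
      have : (fun t : 𝕋 => fourier (-n) t * (b * fourier n₀ t))
          = fun t => b * (fourier (-n) t * fourier n₀ t) := funext fun t => by ring
      rw [this, integral_const_mul]
    rw [expand, coeff_fourier n₀ n]
    by_cases hcase : n = n₀
    · subst hcase
      simp [hbdef]
    · have : fourierCoeff f n = 0 := by
        by_contra hne
        exact hcase (huniq n hne)
      simp [this, hcase]
  have hg2 : MemLp (fun t => f t - b * fourier n₀ t) 2 μ𝕋 := by
    apply MemLp.sub hf2
    apply MemLp.of_bound ((hmeasfourier n₀).const_mul b).aestronglyMeasurable ‖b‖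
    apply ae_of_all
    intro t
    rw [norm_mul, norm_fourier, mul_one]
  have h0 := eq_zero_of_coeffs_zero _ hg2 hsub
  have hae : ∀ᵐ t ∂μ𝕋, f t = b * fourier n₀ t := by
    filter_upwards [h0] with t ht
    have ht' : f t - b * fourier n₀ t = 0 := ht
    exact sub_eq_zero.mp ht'
  have hbnorm : ‖b‖ = 1 := by
    obtain ⟨t, ht⟩ := hae.exists
    have h1 := hnorm t
    rw [ht, norm_mul, norm_fourier, mul_one] at h1
    exact h1
  have hbmem : b ∈ Submonoid.unitSphere ℂ := by
    show b ∈ Metric.sphere (0 : ℂ) 1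
    exact mem_sphere_zero_iff_norm.2 hbnorm
  refine ⟨⟨b, hbmem⟩, n₀, ?_⟩
  apply ae_of_torus (p := fun y => F y = ⟨b, hbmem⟩ * y ^ n₀)
  filter_upwards [hae] with t ht
  apply Circle.coe_injective
  show f t = b * ((e t ^ n₀ : Circle) : ℂ)
  rw [coe_zpow]
  show f t = b * ((e t : Circle) : ℂ) ^ n₀
  rw [ht, fourier_char]


lemma hrot (y : Circle) {p : Circle → Prop} (hp : ∀ᵐ x ∂ν, p x) :
    ∀ᵐ x ∂ν, p (y * x) :=
  (measurePreserving_mul_left ν y).quasiMeasurePreserving.tendsto_ae.eventually hp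

lemma zpow_trivial' {k : ℤ} {C : Circle} (h : ∀ z : Circle, C * z ^ k = 1) : k = 0 := by
  have hC : C = 1 := by have := h 1; simpa using this
  apply zpow_trivial
  intro z
  have := h z
  rw [hC, one_mul] at this
  exact this

lemma main_induction {G : Type*} [AddCommGroup G] (φ : G → Circle)
    (hhom : ∀ g h : G, φ (g + h) = φ g * φ h) (hdense : DenseRange φ)
    (htor : ∀ g : G, ∃ N : ℕ, 0 < N ∧ N • g = 0) :
    ∀ m : ℕ, ∀ F : Circle → Circle, Measurable F →
    (∀ h : Fin m → G, ∀ᵐ x ∂ν,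
        (((List.ofFn h).map (fun g (y : Circle) => φ g * y)).foldr mulDeriv F) x = 1) →
    ∃ (c : Circle) (n : ℤ), ∀ᵐ x ∂ν, F x = c * x ^ n := by
  have hφ0 : φ 0 = 1 := by
    have h00 := hhom 0 0
    rw [add_zero] at h00
    exact (mul_eq_left.mp h00.symm)
  have hφpow : ∀ (k : ℕ) (g : G), φ (k • g) = (φ g) ^ k := by
    intro k g
    induction k with
    | zero => simpa using hφ0
    | succ k ihk => rw [succ_nsmul, hhom, ihk, pow_succ]
  intro m
  induction m with
  | zero =>
    intro F hF hpoly
    have h1 := hpoly (fun i => i.elim0)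
    refine ⟨1, 0, ?_⟩
    filter_upwards [h1] with x hx
    simpa using hx
  | succ m ih =>
    intro F hF hpoly
    have hconst : ∀ g : G, ∃ cg : Circle, ∀ᵐ x ∂ν, F (φ g * x) = cg * F x := by
      intro g
      have hFg : Measurable (mulDeriv (fun y => φ g * y) F) :=
        ((hF.comp (measurable_const_mul (φ g))).mul hF.inv)
      obtain ⟨c, n, hc⟩ : ∃ (c : Circle) (n : ℤ), ∀ᵐ x ∂ν,
          mulDeriv (fun y => φ g * y) F x = c * x ^ n := by
        apply ih _ hFg
        intro h
        have h2 := hpoly (Fin.snoc h g)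
        have h3 : List.ofFn (Fin.snoc h g) = List.ofFn h ++ [g] := by
          rw [List.ofFn_succ']
          simp [Fin.snoc_castSucc, List.concat_eq_append]
        rw [h3, List.map_append, List.foldr_append] at h2
        simpa using h2
      obtain ⟨N, hN, hNg⟩ := htor g
      -- telescoping identity
      have htel : ∀ k : ℕ, ∀ᵐ x ∂ν, F ((φ g)^k * x)
          = (∏ j ∈ Finset.range k, (c * ((φ g)^j * x)^n)) * F x := by
        intro k
        induction k with
        | zero => apply ae_of_all; intro x; simp
        | succ k ihk =>
          have hrotk := hrot ((φ g)^k) hc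
          filter_upwards [ihk, hrotk] with x hx1 hx2
          have hx2' : F (φ g * ((φ g)^k * x)) = (c * ((φ g)^k * x)^n) * F ((φ g)^k * x) := by
            have : mulDeriv (fun y => φ g * y) F ((φ g)^k * x)
                = c * ((φ g)^k * x)^n := hx2
            rw [mulDeriv] at this
            calc F (φ g * ((φ g)^k * x))
                = (F (φ g * ((φ g)^k * x)) * (F ((φ g)^k * x))⁻¹) * F ((φ g)^k * x) := by
                  group
              _ = (c * ((φ g)^k * x)^n) * F ((φ g)^k * x) := by rw [this]
          calc F ((φ g)^(k+1) * x) = F (φ g * ((φ g)^k * x)) := by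
                rw [← mul_assoc, pow_succ, mul_comm ((φ g)^k) (φ g)]
            _ = (c * ((φ g)^k * x)^n) * F ((φ g)^k * x) := hx2'
            _ = (c * ((φ g)^k * x)^n) * ((∏ j ∈ Finset.range k, (c * ((φ g)^j * x)^n)) * F x) := by
                rw [hx1]
            _ = (∏ j ∈ Finset.range (k+1), (c * ((φ g)^j * x)^n)) * F x := by
                rw [Finset.prod_range_succ]
                simp [mul_assoc, mul_comm, mul_left_comm]
      have hNtel := htel N
      have hφN : (φ g)^N = 1 := by rw [← hφpow, hNg, hφ0]
      -- deduce a.e. identity  C * x^(n*N) = 1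
      have haeC : ∀ᵐ x ∂ν, (c^N * ((∏ j ∈ Finset.range N, ((φ g)^j)^n))) * x^(n * N) = 1 := by
        filter_upwards [hNtel] with x hx
        rw [hφN, one_mul] at hx
        have h4 : (∏ j ∈ Finset.range N, (c * ((φ g)^j * x)^n)) = 1 := by
          have hx' : (∏ j ∈ Finset.range N, (c * ((φ g)^j * x)^n)) * F x = 1 * F x := by
            rw [one_mul]; exact hx.symm
          exact mul_right_cancel hx'
        rw [← h4]
        rw [Finset.prod_mul_distrib]
        simp_rw [mul_zpow]
        rw [Finset.prod_mul_distrib]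
        simp only [Finset.prod_const, Finset.card_range]
        rw [← zpow_natCast (x^n) N, ← zpow_mul]
        simp [mul_assoc, mul_comm, mul_left_comm]
      -- upgrade to everywhere
      have hev : ∀ z : Circle, (c^N * ((∏ j ∈ Finset.range N, ((φ g)^j)^n))) * z^(n * N) = 1 := by
        have hcont1 : Continuous (fun z : Circle =>
            (c^N * ((∏ j ∈ Finset.range N, ((φ g)^j)^n))) * z^(n * N)) :=
          continuous_const.mul (continuous_zpow _)
        have := Continuous.ae_eq_iff_eq ν hcont1 continuous_const |>.mp
          (haeC : _ =ᵐ[ν] (fun _ => (1:Circle)))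
        intro z
        exact congrFun this z
      have hn0 : n = 0 := by
        have := zpow_trivial' hev
        have hNne : (N : ℤ) ≠ 0 := by exact_mod_cast hN.ne'
        exact (mul_eq_zero.mp this).resolve_right hNne
      refine ⟨c, ?_⟩
      filter_upwards [hc] with x hx
      rw [hn0] at hx
      rw [mulDeriv] at hx
      simp only [zpow_zero, mul_one] at hx
      calc F (φ g * x) = (F (φ g * x) * (F x)⁻¹) * F x := by group
        _ = c * F x := by rw [hx]
    choose cg hcg using hconst
    exact eigen_char φ hdense F hF cg hcg

end Helpers

open Measure in
/-- Let `G = ⊕_{p ∈ P} 𝔽_p` (with `P` an unbounded set of primes) act ergodically on the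
circle by rotations `T_g x = φ(g) x`, where `φ` is a homomorphism with dense image.
Then every phase polynomial `F : S¹ → S¹` of any finite degree with respect to this
action is (a.e.) a constant multiple of a character `z ↦ zⁿ`; in particular every phase
polynomial has degree `< 2`. -/
theorem phasePoly_on_circle_is_character
    (P : Set ℕ) (hP : ∀ p ∈ P, Nat.Prime p) (hunb : ∀ N : ℕ, ∃ p ∈ P, N < p)
    (φ : (Π₀ p : P, ZMod p) → Circle)
    (hhom : ∀ g h : Π₀ p : P, ZMod p, φ (g + h) = φ g * φ h)
    (hdense : DenseRange φ)
    (F : Circle → Circle) (hFmeas : Measurable F)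
    (m : ℕ)
    (hpoly : ∀ h : Fin m → (Π₀ p : P, ZMod p),
      ∀ᵐ x ∂(Measure.haar : Measure Circle),
        (((List.ofFn h).map (fun g (y : Circle) => φ g * y)).foldr mulDeriv F) x = 1) :
    (∃ (c : Circle) (n : ℤ), ∀ᵐ x ∂(Measure.haar : Measure Circle), F x = c * x ^ n) ∧
    (∀ h : Fin 2 → (Π₀ p : P, ZMod p),
      ∀ᵐ x ∂(Measure.haar : Measure Circle),
        (((List.ofFn h).map (fun g (y : Circle) => φ g * y)).foldr mulDeriv F) x = 1) := by
  have htor : ∀ g : Π₀ p : P, ZMod p, ∃ N : ℕ, 0 < N ∧ N • g = 0 := by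
    intro g
    refine ⟨∏ p ∈ g.support, (p : ℕ), ?_, ?_⟩
    · apply Finset.prod_pos
      intro p _
      exact (hP p p.2).pos
    · ext p
      rw [DFinsupp.smul_apply]
      by_cases hp : p ∈ g.support
      · haveI : NeZero (p : ℕ) := ⟨(hP p p.2).pos.ne'⟩
        have hdvd : (p : ℕ) ∣ ∏ q ∈ g.support, (q : ℕ) := Finset.dvd_prod_of_mem _ hp
        rw [nsmul_eq_mul]
        have hz : ((∏ q ∈ g.support, (q : ℕ) : ℕ) : ZMod p) = 0 :=
          (ZMod.natCast_eq_zero_iff _ _).2 hdvd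
        rw [hz, zero_mul]
        simp
      · have hg0 : g p = 0 := DFinsupp.notMem_support_iff.mp hp
        rw [hg0, smul_zero]
        simp
  obtain ⟨c, n, hcn⟩ := main_induction φ hhom hdense htor m F hFmeas hpoly
  refine ⟨⟨c, n, hcn⟩, ?_⟩
  intro h
  have e0 := hcn
  have e1 := hrot (φ (h 1)) hcn
  have e2 := hrot (φ (h 0)) hcn
  have e3 := hrot (φ (h 1) * φ (h 0)) hcn
  filter_upwards [e0, e1, e2, e3] with x hx0 hx1 hx2 hx3
  have hofn : List.ofFn h = [h 0, h 1] := by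
    simp [List.ofFn_succ]
  rw [hofn]
  simp only [List.map_cons, List.map_nil, List.foldr_cons, List.foldr_nil, mulDeriv]
  rw [show φ (h 1) * (φ (h 0) * x) = φ (h 1) * φ (h 0) * x from (mul_assoc _ _ _).symm]
  rw [hx3, hx2, hx1, hx0]
  apply Circle.coe_injective
  push_cast [coe_zpow]
  have c1 : (c : ℂ) ≠ 0 := Circle.coe_ne_zero c
  have c2 : ((φ (h 0) : Circle) : ℂ) ≠ 0 := Circle.coe_ne_zero _
  have c3 : ((φ (h 1) : Circle) : ℂ) ≠ 0 := Circle.coe_ne_zero _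
  have c4 : (x : ℂ) ≠ 0 := Circle.coe_ne_zero x
  simp only [mul_zpow]
  have d1 : ((φ (h 0) : Circle) : ℂ) ^ n ≠ 0 := zpow_ne_zero _ c2
  have d2 : ((φ (h 1) : Circle) : ℂ) ^ n ≠ 0 := zpow_ne_zero _ c3
  have d3 : (x : ℂ) ^ n ≠ 0 := zpow_ne_zero _ c4
  field_simp
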